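/- arXiv:math/0405278 — 2 statements merged into one kernel-verified Lean document; each statement's English description precedes it below -/
import Mathlib

section
/- Abstract perturbation theorem: let B⁰ ⊇ B¹ ⊇ … ⊇ B^s be Banach spaces, {L_t} a family of bounded operators on each B^i satisfying: (a) ‖L_tⁿ‖_{B⁰} ≤ C Mⁿ; (b) ‖L_tⁿ f‖_{B¹} ≤ C αⁿ ‖f‖_{B¹} + C Mⁿ ‖f‖_{B⁰} with α < M; (c) there exist operators Q_1,…,Q_{s−1} with ‖Q_j‖_{B^i→B^{i−j}} ≤ C for j ≤ i ≤ s; (d) setting Δ_j(t) := L_t − L_0 − Σ_{k=1}^{j−1} t^k Q_k, one has ‖Δ_j(t)‖_{B^i→B^{i−j}} ≤ C|t|^j for 0 ≤ j ≤ s, j ≤ i ≤ s. Assume also the Keller–Liverani estimate ‖(z−L_t)⁻¹ − (z−L_0)⁻¹‖_{B¹→B⁰} ≤ C|t|^η, where η = log(ϱ/α)/log(M/α). Then for z with |z| ≥ ϱ at distance ≥ δ from the spectrum of L_0 on every B^k (1 ≤ k ≤ s) and t small, ‖(z−L_t)⁻¹ − R_s(t)‖_{B^s→B⁰} ≤ C|t|^{s−1+η},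 where R_s(t) := Σ_{k=0}^{s−1} t^k Σ_{ℓ_1+⋯+ℓ_j = k} (z−L_0)⁻¹ Q_{ℓ_1}(z−L_0)⁻¹ ⋯ (z−L_0)⁻¹ Q_{ℓ_j}(z−L_0)⁻¹. -/
open Finset

private lemma comp_snoc_sum {A : Type*} [AddCommMonoid A] (G : ∀ j : ℕ, (Fin j → ℕ) → A)
    (k : ℕ) (hk : 1 ≤ k) :
    ∑ j ∈ Finset.range (k+1), ∑ ℓ ∈ (Fintype.piFinset fun _ : Fin j => Finset.Icc 1 k).filter
        (fun ℓ => ∑ i, ℓ i = k), G j ℓ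
    = ∑ m ∈ Finset.Icc 1 k, ∑ j ∈ Finset.range (k - m + 1),
        ∑ ℓ ∈ (Fintype.piFinset fun _ : Fin j => Finset.Icc 1 (k - m)).filter
          (fun ℓ => ∑ i, ℓ i = k - m), G (j+1) (Fin.snoc ℓ m) := by
  rw [Finset.sum_sigma']
  conv_rhs => rw [Finset.sum_sigma', Finset.sum_sigma']
  refine Finset.sum_nbij'
    (fun x => match x with
      | ⟨0, ℓ⟩ => ⟨⟨0, 0⟩, ℓ⟩
      | ⟨j+1, ℓ⟩ => ⟨⟨ℓ (Fin.last j), j⟩, Fin.init ℓ⟩)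
    (fun y => ⟨y.1.2 + 1, Fin.snoc y.2 y.1.1⟩) ?_ ?_ ?_ ?_ ?_
  · rintro ⟨j, ℓ⟩ hmem
    simp only [Finset.mem_sigma, Finset.mem_range, Finset.mem_filter,
      Fintype.mem_piFinset, Finset.mem_Icc] at hmem
    obtain ⟨hj, hℓ, hsum⟩ := hmem
    match j, ℓ, hj, hℓ, hsum with
    | 0, ℓ, hj, hℓ, hsum => simp at hsum; omega
    | (j+1), ℓ, hj, hℓ, hsum =>
      rw [Fin.sum_univ_castSucc] at hsum
      have hS : ∀ i : Fin j, ℓ i.castSucc ≤ ∑ i : Fin j, ℓ i.castSucc := by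
        intro i
        exact Finset.single_le_sum (f := fun i : Fin j => ℓ i.castSucc)
          (fun i _ => Nat.zero_le _) (Finset.mem_univ i)
      have hcard : j ≤ ∑ i : Fin j, ℓ i.castSucc := by
        calc j = (Finset.univ : Finset (Fin j)).card • 1 := by simp
        _ ≤ ∑ i : Fin j, ℓ i.castSucc :=
          Finset.card_nsmul_le_sum _ _ _ (fun i _ => (hℓ i.castSucc).1)
      have hm := hℓ (Fin.last j)
      simp only [Finset.mem_sigma, Finset.mem_range, Finset.mem_filter,
        Fintype.mem_piFinset, Finset.mem_Icc]
      refine ⟨⟨⟨hm.1, by omega⟩, by omega⟩, fun i => ?_, ?_⟩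
      · have := hS i
        have := (hℓ i.castSucc).1
        constructor
        · simpa [Fin.init] using this
        · simp only [Fin.init]
          omega
      · have he : (∑ i, Fin.init ℓ i) = ∑ i : Fin j, ℓ i.castSucc :=
          Finset.sum_congr rfl (fun i _ => rfl)
        omega
  · rintro ⟨⟨m, j⟩, ℓ⟩ hmem
    simp only [Finset.mem_sigma, Finset.mem_range, Finset.mem_filter,
      Fintype.mem_piFinset, Finset.mem_Icc] at hmem ⊢
    obtain ⟨⟨hm, hj⟩, hℓ, hsum⟩ := hmem
    refine ⟨by omega, fun i => ?_, ?_⟩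
    · refine Fin.lastCases ?_ (fun i => ?_) i
      · simp only [Fin.snoc_last]; omega
      · have := hℓ i; simp only [Fin.snoc_castSucc]; omega
    · rw [Fin.sum_univ_castSucc]
      simp only [Fin.snoc_castSucc, Fin.snoc_last]
      omega
  · rintro ⟨j, ℓ⟩ hmem
    simp only [Finset.mem_sigma, Finset.mem_range, Finset.mem_filter,
      Fintype.mem_piFinset, Finset.mem_Icc] at hmem
    obtain ⟨hj, hℓ, hsum⟩ := hmem
    match j, ℓ, hj, hℓ, hsum with
    | 0, ℓ, hj, hℓ, hsum => simp at hsum; omega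
    | (j+1), ℓ, hj, hℓ, hsum =>
      simp only
      congr 1
      exact Fin.snoc_init_self ℓ
  · rintro ⟨⟨m, j⟩, ℓ⟩ _
    simp only
    congr 1
    · rw [Fin.snoc_last]
    · rw [Fin.init_snoc]
  · rintro ⟨j, ℓ⟩ hmem
    simp only [Finset.mem_sigma, Finset.mem_range, Finset.mem_filter,
      Fintype.mem_piFinset, Finset.mem_Icc] at hmem
    obtain ⟨hj, hℓ, hsum⟩ := hmem
    match j, ℓ, hj, hℓ, hsum with
    | 0, ℓ, hj, hℓ, hsum => simp at hsum; omega
    | (j+1), ℓ, hj, hℓ, hsum =>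
      simp only
      congr 1
      exact (Fin.snoc_init_self ℓ).symm

private noncomputable def sigmaOp {A : Type*} [Ring A] (R : A) (Q : ℕ → A) (k : ℕ) : A :=
  ∑ j ∈ Finset.range (k+1),
    ∑ ℓ ∈ (Fintype.piFinset fun _ : Fin j => Finset.Icc 1 k).filter (fun ℓ => ∑ i, ℓ i = k),
      R * (List.ofFn fun i => Q (ℓ i) * R).prod

private lemma sigmaOp_zero {A : Type*} [Ring A] (R : A) (Q : ℕ → A) : sigmaOp R Q 0 = R := by
  simp [sigmaOp]

private lemma sigmaOp_rec {A : Type*} [Ring A] (R : A) (Q : ℕ → A) (k : ℕ) (hk : 1 ≤ k) :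
    sigmaOp R Q k = ∑ m ∈ Finset.Icc 1 k, sigmaOp R Q (k - m) * (Q m * R) := by
  rw [sigmaOp, comp_snoc_sum _ k hk]
  refine Finset.sum_congr rfl fun m hm => ?_
  rw [sigmaOp, Finset.sum_mul]
  refine Finset.sum_congr rfl fun j hj => ?_
  rw [Finset.sum_mul]
  refine Finset.sum_congr rfl fun ℓ hℓ => ?_
  rw [List.ofFn_succ']
  simp only [Fin.snoc_castSucc, Fin.snoc_last, List.concat_eq_append, List.prod_append,
    List.prod_cons, List.prod_nil, mul_one, mul_assoc]

private noncomputable def POp {A : Type*} [Ring A] [Algebra ℂ A] (R : A) (Q : ℕ → A)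
    (t : ℝ) (n : ℕ) : A :=
  ∑ k ∈ Finset.range n, (t : ℂ) ^ k • sigmaOp R Q k

private lemma POp_one {A : Type*} [Ring A] [Algebra ℂ A] (R : A) (Q : ℕ → A) (t : ℝ) :
    POp R Q t 1 = R := by
  simp [POp, sigmaOp_zero]

private lemma POp_zero {A : Type*} [Ring A] [Algebra ℂ A] (R : A) (Q : ℕ → A) (n : ℕ)
    (hn : 1 ≤ n) : POp R Q 0 n = R := by
  rw [POp, Finset.sum_eq_single_of_mem 0 (Finset.mem_range.2 hn)]
  · simp [sigmaOp_zero]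
  · intro k _ hk
    simp [zero_pow hk]

private lemma POp_rec {A : Type*} [Ring A] [Algebra ℂ A] (R : A) (Q : ℕ → A) (t : ℝ) (n : ℕ) :
    POp R Q t (n+1)
      = R + ∑ m ∈ Finset.Icc 1 n, (t : ℂ) ^ m • (POp R Q t (n+1-m) * (Q m * R)) := by
  rw [POp, Finset.sum_range_succ']
  simp only [pow_zero, one_smul, sigmaOp_zero]
  rw [add_comm]
  congr 1
  calc ∑ k ∈ Finset.range n, (t:ℂ)^(k+1) • sigmaOp R Q (k+1)
      = ∑ k ∈ Finset.range n, ∑ m ∈ Finset.Icc 1 (k+1),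
          (t:ℂ)^(k+1) • (sigmaOp R Q (k+1-m) * (Q m * R)) := by
        refine Finset.sum_congr rfl fun k _ => ?_
        rw [sigmaOp_rec R Q (k+1) (Nat.le_add_left 1 k), Finset.smul_sum]
    _ = ∑ m ∈ Finset.Icc 1 n, ∑ k ∈ Finset.Icc (m-1) (n-1),
          (t:ℂ)^(k+1) • (sigmaOp R Q (k+1-m) * (Q m * R)) := by
        refine Finset.sum_comm' ?_
        intro k m
        simp only [Finset.mem_range, Finset.mem_Icc]
        omega
    _ = ∑ m ∈ Finset.Icc 1 n, (t:ℂ)^m • (POp R Q t (n+1-m) * (Q m * R)) := by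
        refine Finset.sum_congr rfl fun m hm => ?_
        simp only [Finset.mem_Icc] at hm
        rw [show Finset.Icc (m-1) (n-1) = Finset.Ico (m-1) n by
          rw [← Finset.Ico_add_one_right_eq_Icc, show n-1+1 = n from by omega]]
        rw [Finset.sum_Ico_eq_sum_range, POp, Finset.sum_mul, Finset.smul_sum]
        refine Finset.sum_congr (by congr 1; omega) fun i hi => ?_
        rw [show m-1+i+1 = m+i from by omega, show m+i-m = i from by omega,
          pow_add, mul_smul, smul_mul_assoc]

private lemma seminorm_sum_le {𝕜 E ι : Type*} [NormedField 𝕜] [AddCommGroup E] [Module 𝕜 E]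
    (N : Seminorm 𝕜 E) (s : Finset ι) (g : ι → E) : N (∑ i ∈ s, g i) ≤ ∑ i ∈ s, N (g i) := by
  induction s using Finset.cons_induction with
  | empty => simp
  | cons a s ha ih =>
    rw [Finset.sum_cons, Finset.sum_cons]
    exact le_trans (map_add_le_add _ _ _) (by gcongr)

set_option maxHeartbeats 1000000 in

/-- Abstract perturbation theorem (Theorem 7 of the paper). A scale of Banach
spaces `B⁰ ⊇ B¹ ⊇ … ⊇ B^s` is modeled by a single vector space `X` endowed with
an increasing family of seminorms `N 0 ≤ N 1 ≤ … ≤ N s`. Given a family of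
operators `L t` satisfying uniform power bounds (a), a Lasota–Yorke inequality
(b), Taylor coefficients `Q j` bounded from `B^i` to `B^{i−j}` (c), Taylor
remainders `Δ_j(t) = L_t − L_0 − Σ_{k<j} t^k Q_k` of size `|t|^j` from `B^i` to
`B^{i−j}` (d), a resolvent `R = (z−L_0)⁻¹` uniformly bounded on every level of
the scale, resolvents `Rt t = (z−L_t)⁻¹`, and the Keller–Liverani estimate
`‖(z−L_t)⁻¹ − (z−L_0)⁻¹‖_{B¹→B⁰} ≤ C|t|^η` with `η = log(ϱ/α)/log(M/α)`, the
resolvent of `L_t` is approximated in `‖·‖_{B^s→B⁰}` by the Taylor polynomial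
`R_s(t) = Σ_{k<s} t^k Σ_{ℓ₁+⋯+ℓ_j=k} R Q_{ℓ₁} R ⋯ Q_{ℓ_j} R` up to an error
`C'|t|^{s−1+η}`. -/
theorem stmt11 {X : Type*} [AddCommGroup X] [Module ℂ X]
    (s : ℕ) (hs : 1 ≤ s)
    (N : ℕ → Seminorm ℂ X)
    (L : ℝ → X →ₗ[ℂ] X) (Q : ℕ → X →ₗ[ℂ] X)
    (I : Set ℝ) (hI : I ∈ nhds (0 : ℝ))
    (C M α ϱ K : ℝ) (z : ℂ)
    (hC : 0 < C) (hα : 0 < α) (hαϱ : α < ϱ) (hϱM : ϱ < M)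
    (hmono : ∀ i < s, ∀ f, N i f ≤ N (i + 1) f)
    (ha : ∀ t ∈ I, ∀ (n : ℕ) (f : X), N 0 (((L t) ^ n) f) ≤ C * M ^ n * N 0 f)
    (hb : ∀ t ∈ I, ∀ (n : ℕ) (f : X),
      N 1 (((L t) ^ n) f) ≤ C * α ^ n * N 1 f + C * M ^ n * N 0 f)
    (hQ : ∀ j, 1 ≤ j → j ≤ s - 1 → ∀ i, j ≤ i → i ≤ s → ∀ f,
      N (i - j) (Q j f) ≤ C * N i f)
    (hΔ : ∀ t ∈ I, ∀ j, 1 ≤ j → j ≤ s → ∀ i, j ≤ i → i ≤ s → ∀ f,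
      N (i - j) ((L t - L 0 - ∑ k ∈ Finset.Icc 1 (j - 1), (t : ℂ) ^ k • Q k) f)
        ≤ C * |t| ^ j * N i f)
    (R : X →ₗ[ℂ] X) (Rt : ℝ → X →ₗ[ℂ] X)
    (hR : R * (z • (1 : X →ₗ[ℂ] X) - L 0) = 1)
    (hR' : (z • (1 : X →ₗ[ℂ] X) - L 0) * R = 1)
    (hRt : ∀ t ∈ I, Rt t * (z • (1 : X →ₗ[ℂ] X) - L t) = 1 ∧
      (z • (1 : X →ₗ[ℂ] X) - L t) * Rt t = 1)
    (hRbound : ∀ k ≤ s, ∀ f, N k (R f) ≤ K * N k f)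
    (hKL : ∀ t ∈ I, ∀ f,
      N 0 ((Rt t - R) f)
        ≤ C * |t| ^ (Real.log (ϱ / α) / Real.log (M / α)) * N 1 f) :
    ∃ C' > 0, ∃ t₀ > 0, ∀ t ∈ I, |t| ≤ t₀ → ∀ f : X,
      N 0 ((Rt t
        - ∑ k ∈ Finset.range s, (t : ℂ) ^ k •
            ∑ j ∈ Finset.range (k + 1),
              ∑ ℓ ∈ (Fintype.piFinset fun _ : Fin j => Finset.Icc 1 k) |>.filter
                  (fun ℓ => ∑ i, ℓ i = k),
                R * (List.ofFn fun i => Q (ℓ i) * R).prod) f)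
        ≤ C' * |t| ^ ((s : ℝ) - 1 + Real.log (ϱ / α) / Real.log (M / α)) * N s f := by
  classical
  set η := Real.log (ϱ / α) / Real.log (M / α) with hηdef
  have hαM : α < M := hαϱ.trans hϱM
  have hMα : 1 < M / α := (one_lt_div hα).2 hαM
  have hϱα : 1 < ϱ / α := (one_lt_div hα).2 hαϱ
  have hη0 : 0 < η := div_pos (Real.log_pos hϱα) (Real.log_pos hMα)
  have hη1 : η ≤ 1 := by
    rw [hηdef, div_le_one (Real.log_pos hMα)]
    exact Real.log_le_log (by positivity) ((div_le_div_iff_of_pos_right hα).2 hϱM.le)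
  have h0I : (0 : ℝ) ∈ I := mem_of_mem_nhds hI
  set K' := max K 1 with hK'def
  have hK'0 : (0 : ℝ) < K' := one_pos.trans_le (le_max_right K 1)
  have hRb' : ∀ k ≤ s, ∀ f, N k (R f) ≤ K' * N k f := fun k hk f =>
    (hRbound k hk f).trans (mul_le_mul_of_nonneg_right (le_max_left K 1) (apply_nonneg _ _))
  have hRt0 : Rt 0 = R := by
    calc Rt 0 = Rt 0 * ((z • (1 : X →ₗ[ℂ] X) - L 0) * R) := by rw [hR', mul_one]
      _ = (Rt 0 * (z • (1 : X →ₗ[ℂ] X) - L 0)) * R := by rw [mul_assoc]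
      _ = R := by rw [(hRt 0 h0I).1, one_mul]
  have key1 : ∀ t ∈ I, Rt t - R = Rt t * ((L t - L 0) * R) := by
    intro t ht
    have h1 : Rt t * ((z • (1 : X →ₗ[ℂ] X) - L 0) * R) = Rt t := by rw [hR', mul_one]
    have h2 : Rt t * ((z • (1 : X →ₗ[ℂ] X) - L t) * R) = R := by
      rw [← mul_assoc, (hRt t ht).1, one_mul]
    calc Rt t - R
        = Rt t * ((z • (1 : X →ₗ[ℂ] X) - L 0) * R)
          - Rt t * ((z • (1 : X →ₗ[ℂ] X) - L t) * R) := by rw [h1, h2]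
      _ = Rt t * ((L t - L 0) * R) := by
          rw [← mul_sub, ← sub_mul]
          congr 2
          abel
  have claim : ∀ b : ℕ, ∃ C' > 0, ∀ n, 1 ≤ n → n ≤ b → n ≤ s →
      ∀ t ∈ I, |t| ≤ 1 → ∀ f : X,
      N 0 ((Rt t - POp R Q t n) f) ≤ C' * |t| ^ ((n : ℝ) - 1 + η) * N n f := by
    intro b
    induction b with
    | zero => exact ⟨1, one_pos, fun n h1 h0 => absurd (h1.trans h0) (by omega)⟩
    | succ b ih =>
      obtain ⟨C₀, hC₀, ihb⟩ := ih
      have h01 : 0 ≤ C₀ * C * K' * (s : ℝ) :=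
        mul_nonneg (mul_nonneg (mul_nonneg hC₀.le hC.le) hK'0.le) (Nat.cast_nonneg s)
      have h02 : 0 ≤ C * C * K' := mul_nonneg (mul_nonneg hC.le hC.le) hK'0.le
      have h03 : 0 ≤ K' * K' * C := mul_nonneg (mul_nonneg hK'0.le hK'0.le) hC.le
      refine ⟨C₀ * C * K' * (s : ℝ) + C * C * K' + K' * K' * C + C + C₀, by linarith, ?_⟩
      set C' := C₀ * C * K' * (s : ℝ) + C * C * K' + K' * K' * C + C + C₀ with hC'def
      have hCC' : C ≤ C' := by linarith
      have hC₀C' : C₀ ≤ C' := by linarith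
      intro n h1 hnb hns t ht ht1 f
      rcases eq_or_ne t 0 with rfl | ht0
      · have hne : ((n : ℝ) - 1 + η) ≠ 0 := by
          have hn1 : (1 : ℝ) ≤ (n : ℝ) := by exact_mod_cast h1
          have : (0 : ℝ) < (n : ℝ) - 1 + η := by linarith
          exact this.ne'
        rw [hRt0, POp_zero R Q n h1, sub_self, LinearMap.zero_apply, map_zero,
          abs_zero, Real.zero_rpow hne, mul_zero, zero_mul]
      have htpos : 0 < |t| := abs_pos.2 ht0
      rcases Nat.lt_or_ge n (b + 1) with hlt | hge
      · exact (ihb n h1 (by omega) hns t ht ht1 f).trans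
          (mul_le_mul_of_nonneg_right
            (mul_le_mul_of_nonneg_right hC₀C' (Real.rpow_nonneg (abs_nonneg t) _))
            (apply_nonneg _ _))
      have hn : n = b + 1 := by omega
      subst hn
      rcases Nat.eq_zero_or_pos b with rfl | hb
      · have hP1 : POp R Q t (0 + 1) = R := POp_one R Q t
        rw [hP1]
        have hexp : ((0 + 1 : ℕ) : ℝ) - 1 + η = η := by push_cast; ring
        rw [hexp]
        exact (hKL t ht f).trans
          (mul_le_mul_of_nonneg_right
            (mul_le_mul_of_nonneg_right hCC' (Real.rpow_nonneg (abs_nonneg t) _))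
            (apply_nonneg _ _))
      have hns' : b + 1 ≤ s := hns
      have hSplitSum : (∑ k ∈ Finset.Icc 1 (b + 1 - 1), (t : ℂ) ^ k • Q k)
          = (∑ k ∈ Finset.Icc 1 (b - 1), (t : ℂ) ^ k • Q k) + (t : ℂ) ^ b • Q b := by
        rw [show b + 1 - 1 = (b - 1) + 1 from by omega]
        rw [Finset.sum_Icc_succ_top (by omega), show (b - 1) + 1 = b from by omega]
      have hDb : L t - L 0 = (∑ k ∈ Finset.Icc 1 (b - 1), (t : ℂ) ^ k • Q k)
          + (L t - L 0 - ∑ k ∈ Finset.Icc 1 (b - 1), (t : ℂ) ^ k • Q k) := by abel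
      have hΔsp : (L t - L 0 - ∑ k ∈ Finset.Icc 1 (b - 1), (t : ℂ) ^ k • Q k)
          = (t : ℂ) ^ b • Q b
            + (L t - L 0 - ∑ k ∈ Finset.Icc 1 (b + 1 - 1), (t : ℂ) ^ k • Q k) := by
        rw [hSplitSum]; abel
      have eA : Rt t - R
          = (∑ m ∈ Finset.Icc 1 (b - 1), (t : ℂ) ^ m • (Rt t * (Q m * R)))
            + ((Rt t - R) * ((L t - L 0 - ∑ k ∈ Finset.Icc 1 (b - 1), (t : ℂ) ^ k • Q k) * R)
              + ((t : ℂ) ^ b • (R * (Q b * R))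
                + R * ((L t - L 0 - ∑ k ∈ Finset.Icc 1 (b + 1 - 1), (t : ℂ) ^ k • Q k) * R))) := by
        conv_lhs => rw [key1 t ht, hDb]
        rw [add_mul, mul_add]
        congr 1
        · rw [Finset.sum_mul, Finset.mul_sum]
          exact Finset.sum_congr rfl fun m _ => by rw [smul_mul_assoc, mul_smul_comm]
        · have hthis : R * ((L t - L 0 - ∑ k ∈ Finset.Icc 1 (b - 1), (t : ℂ) ^ k • Q k) * R)
              = (t : ℂ) ^ b • (R * (Q b * R))
                + R * ((L t - L 0 - ∑ k ∈ Finset.Icc 1 (b + 1 - 1), (t : ℂ) ^ k • Q k) * R) := by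
            rw [hΔsp, add_mul, mul_add, smul_mul_assoc, mul_smul_comm]
          have hsm : (Rt t - R)
              * ((L t - L 0 - ∑ k ∈ Finset.Icc 1 (b - 1), (t : ℂ) ^ k • Q k) * R)
              = Rt t * ((L t - L 0 - ∑ k ∈ Finset.Icc 1 (b - 1), (t : ℂ) ^ k • Q k) * R)
                - R * ((L t - L 0 - ∑ k ∈ Finset.Icc 1 (b - 1), (t : ℂ) ^ k • Q k) * R) :=
            sub_mul _ _ _
          rw [hsm, ← hthis]
          abel
      have eB : POp R Q t (b + 1) - R
          = (∑ m ∈ Finset.Icc 1 (b - 1), (t : ℂ) ^ m • (POp R Q t (b + 1 - m) * (Q m * R)))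
            + (t : ℂ) ^ b • (R * (Q b * R)) := by
        rw [POp_rec, add_sub_cancel_left]
        conv_lhs => rw [show b = (b - 1) + 1 from by omega]
        rw [Finset.sum_Icc_succ_top (by omega)]
        rw [show (b - 1) + 1 = b from by omega]
        rw [show b + 1 - b = 1 from by omega, POp_one]
      have hmain : Rt t - POp R Q t (b + 1)
          = (∑ m ∈ Finset.Icc 1 (b - 1),
              (t : ℂ) ^ m • ((Rt t - POp R Q t (b + 1 - m)) * (Q m * R)))
            + ((Rt t - R) * ((L t - L 0 - ∑ k ∈ Finset.Icc 1 (b - 1), (t : ℂ) ^ k • Q k) * R)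
              + R * ((L t - L 0 - ∑ k ∈ Finset.Icc 1 (b + 1 - 1), (t : ℂ) ^ k • Q k) * R)) := by
        have h0 : Rt t - POp R Q t (b + 1) = (Rt t - R) - (POp R Q t (b + 1) - R) := by abel
        conv_lhs => rw [h0, eA, eB]
        rw [Finset.sum_congr rfl (fun m _ =>
          show (t : ℂ) ^ m • ((Rt t - POp R Q t (b + 1 - m)) * (Q m * R))
            = (t : ℂ) ^ m • (Rt t * (Q m * R))
              - (t : ℂ) ^ m • (POp R Q t (b + 1 - m) * (Q m * R)) from by
            rw [sub_mul, smul_sub]), Finset.sum_sub_distrib]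
        abel
      have hnorm : ∀ m : ℕ, ‖(t : ℂ) ^ m‖ = |t| ^ m := by
        intro m
        rw [norm_pow, Complex.norm_real, Real.norm_eq_abs]
      have hterm : ∀ m ∈ Finset.Icc 1 (b - 1),
          N 0 (((t : ℂ) ^ m • ((Rt t - POp R Q t (b + 1 - m)) * (Q m * R))) f)
            ≤ (C₀ * C * K') * (|t| ^ ((b : ℝ) + η) * N (b + 1) f) := by
        intro m hm
        simp only [Finset.mem_Icc] at hm
        rw [LinearMap.smul_apply, map_smul_eq_mul, Module.End.mul_apply, Module.End.mul_apply]
        have h2 := hQ m hm.1 (by omega) (b + 1) (by omega) hns' (R f)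
        have h3 := hRb' (b + 1) hns' f
        have h23 : N (b + 1 - m) (Q m (R f)) ≤ C * (K' * N (b + 1) f) :=
          h2.trans (mul_le_mul_of_nonneg_left h3 hC.le)
        have h1 := (ihb (b + 1 - m) (by omega) (by omega) (by omega) t ht ht1
          (Q m (R f))).trans
          (mul_le_mul_of_nonneg_left h23
            (mul_nonneg hC₀.le (Real.rpow_nonneg (abs_nonneg t) _)))
        have hmerge : |t| ^ m * |t| ^ (((b + 1 - m : ℕ) : ℝ) - 1 + η)
            = |t| ^ ((b : ℝ) + η) := by
          rw [← Real.rpow_natCast |t| m, ← Real.rpow_add htpos]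
          congr 1
          rw [Nat.cast_sub (by omega : m ≤ b + 1)]
          push_cast
          ring
        calc ‖(t : ℂ) ^ m‖ * N 0 ((Rt t - POp R Q t (b + 1 - m)) ((Q m) (R f)))
            ≤ |t| ^ m * (C₀ * |t| ^ (((b + 1 - m : ℕ) : ℝ) - 1 + η)
                * (C * (K' * N (b + 1) f))) := by
              rw [hnorm m]
              exact mul_le_mul_of_nonneg_left h1 (pow_nonneg (abs_nonneg t) m)
          _ = (C₀ * C * K') * ((|t| ^ m * |t| ^ (((b + 1 - m : ℕ) : ℝ) - 1 + η))
                * N (b + 1) f) := by ring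
          _ = (C₀ * C * K') * (|t| ^ ((b : ℝ) + η) * N (b + 1) f) := by rw [hmerge]
      have hSb : ∑ m ∈ Finset.Icc 1 (b - 1),
          N 0 (((t : ℂ) ^ m • ((Rt t - POp R Q t (b + 1 - m)) * (Q m * R))) f)
            ≤ (s : ℝ) * ((C₀ * C * K') * (|t| ^ ((b : ℝ) + η) * N (b + 1) f)) := by
        refine (Finset.sum_le_card_nsmul _ _ _ hterm).trans ?_
        rw [nsmul_eq_mul]
        refine mul_le_mul_of_nonneg_right ?_ ?_
        · rw [Nat.card_Icc]
          exact_mod_cast (by omega : b - 1 + 1 - 1 ≤ s)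
        · exact mul_nonneg (mul_nonneg (mul_nonneg hC₀.le hC.le) hK'0.le)
            (mul_nonneg (Real.rpow_nonneg (abs_nonneg t) _) (apply_nonneg _ _))
      have hm2 : |t| ^ η * |t| ^ (b : ℕ) = |t| ^ ((b : ℝ) + η) := by
        rw [← Real.rpow_natCast |t| b, ← Real.rpow_add htpos, add_comm]
      have hKLb : N 0 (((Rt t - R)
          * ((L t - L 0 - ∑ k ∈ Finset.Icc 1 (b - 1), (t : ℂ) ^ k • Q k) * R)) f)
          ≤ (C * C * K') * (|t| ^ ((b : ℝ) + η) * N (b + 1) f) := by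
        rw [Module.End.mul_apply, Module.End.mul_apply]
        have h2 := hΔ t ht b hb (by omega) (b + 1) (by omega) hns' (R f)
        rw [show b + 1 - b = 1 from by omega] at h2
        have h3 := hRb' (b + 1) hns' f
        have h23 : N 1 ((L t - L 0 - ∑ k ∈ Finset.Icc 1 (b - 1), (t : ℂ) ^ k • Q k) (R f))
            ≤ C * |t| ^ b * (K' * N (b + 1) f) :=
          h2.trans (mul_le_mul_of_nonneg_left h3
            (mul_nonneg hC.le (pow_nonneg (abs_nonneg t) b)))
        refine (hKL t ht _).trans ?_
        calc C * |t| ^ η * N 1 ((L t - L 0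
              - ∑ k ∈ Finset.Icc 1 (b - 1), (t : ℂ) ^ k • Q k) (R f))
            ≤ C * |t| ^ η * (C * |t| ^ b * (K' * N (b + 1) f)) :=
              mul_le_mul_of_nonneg_left h23
                (mul_nonneg hC.le (Real.rpow_nonneg (abs_nonneg t) _))
          _ = (C * C * K') * ((|t| ^ η * |t| ^ (b : ℕ)) * N (b + 1) f) := by ring
          _ = (C * C * K') * (|t| ^ ((b : ℝ) + η) * N (b + 1) f) := by rw [hm2]
      have hlastb : N 0 ((R
          * ((L t - L 0 - ∑ k ∈ Finset.Icc 1 (b + 1 - 1), (t : ℂ) ^ k • Q k) * R)) f)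
          ≤ (K' * K' * C) * (|t| ^ ((b : ℝ) + η) * N (b + 1) f) := by
        rw [Module.End.mul_apply, Module.End.mul_apply]
        have h2 := hΔ t ht (b + 1) (by omega) hns' (b + 1) le_rfl hns' (R f)
        rw [show b + 1 - (b + 1) = 0 from by omega] at h2
        have h3 := hRb' (b + 1) hns' f
        have h0 := hRb' 0 (by omega)
          ((L t - L 0 - ∑ k ∈ Finset.Icc 1 (b + 1 - 1), (t : ℂ) ^ k • Q k) (R f))
        have hpow : |t| ^ (b + 1 : ℕ) ≤ |t| ^ ((b : ℝ) + η) := by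
          rw [← Real.rpow_natCast |t| (b + 1)]
          refine Real.rpow_le_rpow_of_exponent_ge htpos ht1 ?_
          push_cast
          linarith
        calc N 0 (R ((L t - L 0 - ∑ k ∈ Finset.Icc 1 (b + 1 - 1), (t : ℂ) ^ k • Q k) (R f)))
            ≤ K' * N 0 ((L t - L 0
                - ∑ k ∈ Finset.Icc 1 (b + 1 - 1), (t : ℂ) ^ k • Q k) (R f)) := h0
          _ ≤ K' * (C * |t| ^ (b + 1) * N (b + 1) (R f)) :=
              mul_le_mul_of_nonneg_left h2 hK'0.le
          _ ≤ K' * (C * |t| ^ (b + 1) * (K' * N (b + 1) f)) :=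
              mul_le_mul_of_nonneg_left
                (mul_le_mul_of_nonneg_left h3
                  (mul_nonneg hC.le (pow_nonneg (abs_nonneg t) _))) hK'0.le
          _ = (K' * K' * C) * (|t| ^ (b + 1 : ℕ) * N (b + 1) f) := by ring
          _ ≤ (K' * K' * C) * (|t| ^ ((b : ℝ) + η) * N (b + 1) f) :=
              mul_le_mul_of_nonneg_left
                (mul_le_mul_of_nonneg_right hpow (apply_nonneg _ _))
                (mul_nonneg (mul_nonneg hK'0.le hK'0.le) hC.le)
      have hexp : ((b + 1 : ℕ) : ℝ) - 1 + η = (b : ℝ) + η := by push_cast; ring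
      rw [hmain]
      rw [LinearMap.add_apply, LinearMap.add_apply, LinearMap.sum_apply, hexp, mul_assoc]
      refine le_trans (map_add_le_add _ _ _) ?_
      refine le_trans (add_le_add (seminorm_sum_le _ _ _) (map_add_le_add _ _ _)) ?_
      have hu0 : (0 : ℝ) ≤ |t| ^ ((b : ℝ) + η) * N (b + 1) f :=
        mul_nonneg (Real.rpow_nonneg (abs_nonneg t) _) (apply_nonneg _ _)
      have hrest : (0 : ℝ) ≤ (C + C₀) * (|t| ^ ((b : ℝ) + η) * N (b + 1) f) :=
        mul_nonneg (by linarith) hu0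
      rw [hC'def]
      linarith [hSb, hKLb, hlastb]
  obtain ⟨C', hC'pos, hclaim⟩ := claim s
  refine ⟨C', hC'pos, 1, one_pos, fun t ht ht1 f => ?_⟩
  have := hclaim s hs le_rfl le_rfl t ht ht1 f
  simpa only [POp, sigmaOp] using this
end

section
/- Quasi-compactness from Lasota–Yorke plus compactness: let B, B_w be Banach spaces with a compact linear map ι: B → B_w that is injective, and L a bounded operator on B with ‖Lⁿ f‖_B ≤ C σⁿ ‖f‖_B + C ‖ι f‖_{B_w} for all n (where ι intertwines L with a bounded operator on B_w, and 0 < σ < 1). Then the essential spectral radius of L on B is at most σ. -/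
/-- Hennion's theorem (quasi-compactness from a Lasota–Yorke inequality plus
compactness of the embedding in a weak space): if `ι : B → B_w` is an injective
compact embedding intertwining `L` with a bounded operator `L_w`, and
`‖Lⁿf‖ ≤ Cσⁿ‖f‖ + C‖ιf‖` with `0 < σ < 1`, then the essential spectral radius
of `L` on `B` is at most `σ`, expressed via Nussbaum's formula: for every
`ρ > σ` there is `n` such that the image of the unit ball under `Lⁿ` can be
covered by finitely many balls of radius `ρⁿ`. -/
theorem stmt16 {B Bw : Type*} [NormedAddCommGroup B] [NormedSpace ℂ B]
    [NormedAddCommGroup Bw] [NormedSpace ℂ Bw]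
    (ι : B →L[ℂ] Bw) (hinj : Function.Injective ι) (hcomp : IsCompactOperator ι)
    (L : B →L[ℂ] B) (Lw : Bw →L[ℂ] Bw) (hcomm : ∀ f, ι (L f) = Lw (ι f))
    (C σ : ℝ) (hC : 0 < C) (hσ0 : 0 < σ) (hσ1 : σ < 1)
    (hLY : ∀ (n : ℕ) (f : B), ‖(L ^ n) f‖ ≤ C * σ ^ n * ‖f‖ + C * ‖ι f‖) :
    ∀ ρ : ℝ, σ < ρ → ∃ n : ℕ, 0 < n ∧ ∃ F : Finset B,
      (L ^ n) '' Metric.closedBall 0 1 ⊆ ⋃ c ∈ F, Metric.closedBall c (ρ ^ n) := by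
  classical
  intro ρ hρ
  have hρ0 : 0 < ρ := hσ0.trans hρ
  -- choose n with 4 C (σ/ρ)^n < 1 and n > 0
  have hr0 : 0 < σ / ρ := div_pos hσ0 hρ0
  have hr1 : σ / ρ < 1 := (div_lt_one hρ0).2 hρ
  obtain ⟨m, hm⟩ := exists_pow_lt_of_lt_one (by positivity : (0:ℝ) < 1 / (4 * C)) hr1
  set n := m + 1 with hn
  have hpow : (σ / ρ) ^ n < 1 / (4 * C) := by
    calc (σ / ρ) ^ n = (σ / ρ) ^ m * (σ / ρ) := pow_succ _ _
    _ ≤ (σ / ρ) ^ m * 1 := by nlinarith [pow_pos hr0 m]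
    _ = (σ / ρ) ^ m := by ring
    _ < 1 / (4 * C) := hm
  have key : 4 * C * σ ^ n < ρ ^ n := by
    have h1 : σ ^ n / ρ ^ n < 1 / (4 * C) := by rwa [div_pow] at hpow
    have h2 := (div_lt_div_iff₀ (pow_pos hρ0 n) (by positivity : (0:ℝ) < 4 * C)).1 h1
    nlinarith
  refine ⟨n, Nat.succ_pos m, ?_⟩
  -- totally bounded image of the unit ball under ι
  obtain ⟨K, hK, hKsub⟩ := hcomp.image_closedBall_subset_compact (𝕜₁ := ℂ)
    (f := (ι : B →ₛₗ[RingHom.id ℂ] Bw)) 1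
  have htb : TotallyBounded ((ι : B → Bw) '' Metric.closedBall 0 1) :=
    hK.totallyBounded.subset hKsub
  set δ : ℝ := ρ ^ n / (4 * C) with hδ
  have hδ0 : 0 < δ := by positivity
  obtain ⟨t, hts, htf, htcov⟩ := totallyBounded_iff_subset.1 htb
    {p : Bw × Bw | dist p.1 p.2 < δ} (Metric.dist_mem_uniformity hδ0)
  -- choose preimages of the centers
  choose g hg hgι using fun y (hy : y ∈ t) => hts hy
  refine ⟨(htf.toFinset.attach.image fun y => (L ^ n) (g y.1 (htf.mem_toFinset.1 y.2))), ?_⟩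
  rintro - ⟨f, hf, rfl⟩
  have hfb : ‖f‖ ≤ 1 := by simpa using Metric.mem_closedBall.1 hf
  have : ι f ∈ (ι : B → Bw) '' Metric.closedBall 0 1 := ⟨f, hf, rfl⟩
  obtain ⟨y, hy, hyd⟩ := Set.mem_iUnion₂.1 (htcov this)
  have hyt := htf.mem_toFinset.2 hy
  set gy := g y hy with hgy
  have hgyb : ‖gy‖ ≤ 1 := by simpa using Metric.mem_closedBall.1 (hg y hy)
  refine Set.mem_iUnion₂.2 ⟨(L ^ n) gy, ?_, ?_⟩
  · exact Finset.mem_image.2 ⟨⟨y, hyt⟩, Finset.mem_attach _ _, rfl⟩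
  · have hdist : ‖ι (f - gy)‖ < δ := by
      have : dist (ι f) (ι gy) < δ := by
        simpa [hgy, hgι y hy] using hyd
      simpa [dist_eq_norm, map_sub] using this
    have hLYn := hLY n (f - gy)
    have hfg : ‖f - gy‖ ≤ 2 := by
      calc ‖f - gy‖ ≤ ‖f‖ + ‖gy‖ := norm_sub_le _ _
      _ ≤ 2 := by linarith
    have : ‖(L ^ n) f - (L ^ n) gy‖ ≤ C * σ ^ n * 2 + C * δ := by
      rw [← map_sub]
      refine hLYn.trans ?_
      have h1 : C * σ ^ n * ‖f - gy‖ ≤ C * σ ^ n * 2 :=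
        mul_le_mul_of_nonneg_left hfg (by positivity)
      have h2 : C * ‖ι (f - gy)‖ ≤ C * δ := mul_le_mul_of_nonneg_left hdist.le hC.le
      linarith
    rw [Metric.mem_closedBall, dist_eq_norm]
    have hCδ : C * δ = ρ ^ n / 4 := by
      field_simp [hδ]
      rw [hδ]; field_simp
    nlinarith [this]
end
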